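/- For every natural number m and all real x, V_m(x) ≥ 1/√((m+1) + x²), and consequently V_m(x) ≥ 1/(√(m+1) + |x|). -/

import Mathlib

noncomputable def Vm (m : ℕ) (x : ℝ) : ℝ :=
  (1 / (Nat.factorial m : ℝ)) * ∫ u in Set.Ioi (0:ℝ), u^m * Real.exp (-u) / Real.sqrt (x^2 + u)

open MeasureTheory Set Real

lemma intJ (n : ℕ) : IntegrableOn (fun u : ℝ => u ^ n * Real.exp (-u)) (Set.Ioi 0) := by
  have h := Real.GammaIntegral_convergent (s := (n : ℝ) + 1) (by positivity)
  refine h.congr_fun (fun u hu => ?_) measurableSet_Ioi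
  have : ((n : ℝ) + 1 - 1) = (n : ℝ) := by ring
  rw [this]
  beta_reduce
  rw [Real.rpow_natCast, mul_comm]

lemma valJ (n : ℕ) : ∫ u in Set.Ioi (0:ℝ), u ^ n * Real.exp (-u) = n.factorial := by
  have h := Real.Gamma_eq_integral (s := (n : ℝ) + 1) (by positivity)
  rw [Real.Gamma_nat_eq_factorial] at h
  rw [h]
  refine setIntegral_congr_fun measurableSet_Ioi (fun u hu => ?_)
  have : ((n : ℝ) + 1 - 1) = (n : ℝ) := by ring
  rw [mul_comm, this, Real.rpow_natCast]

theorem Vm_lower_bounds : ∀ (m : ℕ) (x : ℝ),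
    Vm m x ≥ 1 / Real.sqrt (((m:ℝ)+1) + x^2) ∧
    Vm m x ≥ 1 / (Real.sqrt ((m:ℝ)+1) + |x|) := by
  intro m x
  set s : ℝ := ((m:ℝ) + 1) + x^2 with hs
  have hs_pos : 0 < s := by positivity
  set w : ℝ → ℝ := fun u => u ^ m * Real.exp (-u) with hw
  set g : ℝ → ℝ := fun u => Real.sqrt (x ^ 2 + u) with hg
  have hwpos : ∀ u ∈ Set.Ioi (0:ℝ), 0 ≤ w u := fun u hu => by
    have : (0:ℝ) < u := hu
    positivity
  have hgpos : ∀ u ∈ Set.Ioi (0:ℝ), 0 < g u := fun u hu => by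
    have : (0:ℝ) < u := hu
    exact Real.sqrt_pos.2 (by positivity)
  -- measurability
  have hwm : Measurable w := by fun_prop
  have hgm : Measurable g := by fun_prop
  -- integrability of w/g
  have int1 : IntegrableOn (fun u => w u / g u) (Set.Ioi 0) := by
    have hb := Real.GammaIntegral_convergent (s := (m : ℝ) + 1/2) (by positivity)
    refine Integrable.mono' hb ((hwm.div hgm).aestronglyMeasurable) ?_
    rw [ae_restrict_iff' measurableSet_Ioi]
    refine ae_of_all _ (fun u hu => ?_)
    have hu0 : (0:ℝ) < u := hu
    have hgu : Real.sqrt u ≤ g u := Real.sqrt_le_sqrt (by nlinarith)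
    have hsu : (0:ℝ) < Real.sqrt u := Real.sqrt_pos.2 hu0
    have h1 : w u / g u ≤ w u / Real.sqrt u :=
      div_le_div_of_nonneg_left (hwpos u hu) hsu hgu |>.trans_eq rfl
    have h2 : w u / Real.sqrt u = Real.exp (-u) * u ^ ((m:ℝ) + 1/2 - 1) := by
      rw [hw]
      rw [Real.sqrt_eq_rpow]
      rw [show ((m:ℝ) + 1/2 - 1) = (m:ℝ) - 1/2 by ring]
      rw [show ((m:ℝ) - 1/2) = (m:ℝ) + (-(1/2)) by ring, Real.rpow_add hu0,
        Real.rpow_natCast, Real.rpow_neg hu0.le]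
      field_simp
    rw [Real.norm_eq_abs, abs_of_nonneg (div_nonneg (hwpos u hu) (hgpos u hu).le)]
    exact h1.trans_eq h2
  -- integrability of w * g^2
  have int3 : IntegrableOn (fun u => w u * g u ^ 2) (Set.Ioi 0) := by
    have h1 : IntegrableOn (fun u : ℝ => x^2 * (u ^ m * Real.exp (-u)) + u ^ (m+1) * Real.exp (-u))
        (Set.Ioi 0) := ((intJ m).const_mul _).add (intJ (m+1))
    refine h1.congr_fun (fun u hu => ?_) measurableSet_Ioi
    have hu0 : (0:ℝ) < u := hu
    have : g u ^ 2 = x ^ 2 + u := Real.sq_sqrt (by positivity)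
    rw [hw, hg] at *
    simp only []
    rw [this]
    ring
  -- integrability of w * g
  have int2 : IntegrableOn (fun u => w u * g u) (Set.Ioi 0) := by
    have hb : IntegrableOn (fun u => w u + w u * g u ^ 2) (Set.Ioi 0) := (intJ m).add int3
    refine Integrable.mono' hb ((hwm.mul hgm).aestronglyMeasurable) ?_
    rw [ae_restrict_iff' measurableSet_Ioi]
    refine ae_of_all _ (fun u hu => ?_)
    have hwu := hwpos u hu
    have hgu := (hgpos u hu).le
    rw [Real.norm_eq_abs, abs_of_nonneg (mul_nonneg hwu hgu)]
    nlinarith [sq_nonneg (g u - 1)]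
  -- values
  have valw : ∫ u in Set.Ioi (0:ℝ), w u = m.factorial := valJ m
  have valwg2 : ∫ u in Set.Ioi (0:ℝ), w u * g u ^ 2 = (m.factorial : ℝ) * s := by
    have h1 : ∀ u ∈ Set.Ioi (0:ℝ), w u * g u ^ 2
        = x^2 * (u ^ m * Real.exp (-u)) + u ^ (m+1) * Real.exp (-u) := by
      intro u hu
      have hu0 : (0:ℝ) < u := hu
      have : g u ^ 2 = x ^ 2 + u := Real.sq_sqrt (by positivity)
      rw [hw] at *
      simp only []
      rw [this]
      ring
    rw [setIntegral_congr_fun measurableSet_Ioi h1,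
      integral_add ((intJ m).const_mul _) (intJ (m+1)), integral_const_mul, valJ m, valJ (m+1)]
    rw [Nat.factorial_succ]
    push_cast
    ring
  -- Cauchy-Schwarz setup
  have conj2 : Real.HolderConjugate 2 2 := Real.holderConjugate_iff.mpr ⟨one_lt_two, by norm_num⟩
  set μ := volume.restrict (Set.Ioi (0:ℝ)) with hμ
  have two_eq : (ENNReal.ofReal (2:ℝ)) = 2 := by norm_num
  -- generic CS lemma
  have CS : ∀ f h : ℝ → ℝ, Measurable f → Measurable h →
      (∀ u ∈ Set.Ioi (0:ℝ), 0 ≤ f u) → (∀ u ∈ Set.Ioi (0:ℝ), 0 ≤ h u) →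
      IntegrableOn (fun u => f u ^ 2) (Set.Ioi 0) → IntegrableOn (fun u => h u ^ 2) (Set.Ioi 0) →
      (∫ u in Set.Ioi (0:ℝ), f u * h u) ^ 2 ≤
        (∫ u in Set.Ioi (0:ℝ), f u ^ 2) * (∫ u in Set.Ioi (0:ℝ), h u ^ 2) := by
    intro f h hfm hhm hf0 hh0 hf2 hh2
    have hf0' : 0 ≤ᵐ[μ] f := by
      rw [hμ]
      filter_upwards [ae_restrict_mem measurableSet_Ioi] with u hu using hf0 u hu
    have hh0' : 0 ≤ᵐ[μ] h := by
      rw [hμ]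
      filter_upwards [ae_restrict_mem measurableSet_Ioi] with u hu using hh0 u hu
    have hfL : MemLp f (ENNReal.ofReal 2) μ := by
      rw [two_eq]
      exact (memLp_two_iff_integrable_sq hfm.aestronglyMeasurable).2 hf2
    have hhL : MemLp h (ENNReal.ofReal 2) μ := by
      rw [two_eq]
      exact (memLp_two_iff_integrable_sq hhm.aestronglyMeasurable).2 hh2
    have key := integral_mul_le_Lp_mul_Lq_of_nonneg conj2 hf0' hh0' hfL hhL
    have e1 : ∫ a, f a ^ (2:ℝ) ∂μ = ∫ u in Set.Ioi (0:ℝ), f u ^ 2 := by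
      rw [hμ]; exact integral_congr_ae (ae_of_all _ (fun u => Real.rpow_two (f u)))
    have e2 : ∫ a, h a ^ (2:ℝ) ∂μ = ∫ u in Set.Ioi (0:ℝ), h u ^ 2 := by
      rw [hμ]; exact integral_congr_ae (ae_of_all _ (fun u => Real.rpow_two (h u)))
    rw [e1, e2] at key
    have hA : (0:ℝ) ≤ ∫ u in Set.Ioi (0:ℝ), f u ^ 2 :=
      integral_nonneg (fun u => sq_nonneg _)
    have hB : (0:ℝ) ≤ ∫ u in Set.Ioi (0:ℝ), h u ^ 2 :=
      integral_nonneg (fun u => sq_nonneg _)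
    have key' : ∫ u in Set.Ioi (0:ℝ), f u * h u ≤
        Real.sqrt ((∫ u in Set.Ioi (0:ℝ), f u ^ 2) * (∫ u in Set.Ioi (0:ℝ), h u ^ 2)) := by
      rw [Real.sqrt_mul hA, Real.sqrt_eq_rpow, Real.sqrt_eq_rpow]
      exact key
    have hI0 : (0:ℝ) ≤ ∫ u in Set.Ioi (0:ℝ), f u * h u := by
      rw [hμ] at *
      refine setIntegral_nonneg measurableSet_Ioi (fun u hu => mul_nonneg (hf0 u hu) (hh0 u hu))
    calc (∫ u in Set.Ioi (0:ℝ), f u * h u) ^ 2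
        ≤ Real.sqrt ((∫ u in Set.Ioi (0:ℝ), f u ^ 2) * (∫ u in Set.Ioi (0:ℝ), h u ^ 2)) ^ 2 :=
          pow_le_pow_left₀ hI0 key' 2
      _ = _ := Real.sq_sqrt (mul_nonneg hA hB)
  -- apply CS twice
  set A : ℝ := ∫ u in Set.Ioi (0:ℝ), w u / g u with hA
  set B : ℝ := ∫ u in Set.Ioi (0:ℝ), w u * g u with hB
  -- CS1 : (∫ w)² ≤ A * B
  have cs1 : ((m.factorial : ℝ)) ^ 2 ≤ A * B := by
    have h := CS (fun u => Real.sqrt (w u / g u)) (fun u => Real.sqrt (w u * g u))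
      (by fun_prop) (by fun_prop)
      (fun u hu => Real.sqrt_nonneg _) (fun u hu => Real.sqrt_nonneg _)
      (by
        refine int1.congr_fun (fun u hu => ?_) measurableSet_Ioi
        exact (Real.sq_sqrt (div_nonneg (hwpos u hu) (hgpos u hu).le)).symm)
      (by
        refine int2.congr_fun (fun u hu => ?_) measurableSet_Ioi
        exact (Real.sq_sqrt (mul_nonneg (hwpos u hu) (hgpos u hu).le)).symm)
    have e1 : ∫ u in Set.Ioi (0:ℝ), Real.sqrt (w u / g u) * Real.sqrt (w u * g u)
        = ∫ u in Set.Ioi (0:ℝ), w u := by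
      refine setIntegral_congr_fun measurableSet_Ioi (fun u hu => ?_)
      rw [← Real.sqrt_mul (div_nonneg (hwpos u hu) (hgpos u hu).le)]
      rw [div_mul_eq_mul_div, mul_comm (w u) (w u * g u), mul_assoc,
        mul_div_assoc, mul_div_cancel_left₀ _ (hgpos u hu).ne', ← sq]
      exact Real.sqrt_sq (hwpos u hu)
    have e2 : ∫ u in Set.Ioi (0:ℝ), Real.sqrt (w u / g u) ^ 2 = A := by
      rw [hA]
      refine setIntegral_congr_fun measurableSet_Ioi (fun u hu => ?_)
      exact Real.sq_sqrt (div_nonneg (hwpos u hu) (hgpos u hu).le)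
    have e3 : ∫ u in Set.Ioi (0:ℝ), Real.sqrt (w u * g u) ^ 2 = B := by
      rw [hB]
      refine setIntegral_congr_fun measurableSet_Ioi (fun u hu => ?_)
      exact Real.sq_sqrt (mul_nonneg (hwpos u hu) (hgpos u hu).le)
    rw [e1, e2, e3, valw] at h
    exact h
  -- CS2 : B² ≤ (∫ w) * (∫ w g²)
  have cs2 : B ^ 2 ≤ (m.factorial : ℝ) * ((m.factorial : ℝ) * s) := by
    have h := CS (fun u => Real.sqrt (w u)) (fun u => Real.sqrt (w u) * g u)
      (by fun_prop) (by fun_prop)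
      (fun u hu => Real.sqrt_nonneg _)
      (fun u hu => mul_nonneg (Real.sqrt_nonneg _) (hgpos u hu).le)
      (by
        refine (intJ m).congr_fun (fun u hu => ?_) measurableSet_Ioi
        exact (Real.sq_sqrt (hwpos u hu)).symm)
      (by
        refine int3.congr_fun (fun u hu => ?_) measurableSet_Ioi
        rw [mul_pow, Real.sq_sqrt (hwpos u hu)])
    have e1 : ∫ u in Set.Ioi (0:ℝ), Real.sqrt (w u) * (Real.sqrt (w u) * g u) = B := by
      rw [hB]
      refine setIntegral_congr_fun measurableSet_Ioi (fun u hu => ?_)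
      rw [← mul_assoc, Real.mul_self_sqrt (hwpos u hu)]
    have e2 : ∫ u in Set.Ioi (0:ℝ), Real.sqrt (w u) ^ 2 = (m.factorial : ℝ) := by
      rw [← valw]
      refine setIntegral_congr_fun measurableSet_Ioi (fun u hu => ?_)
      exact Real.sq_sqrt (hwpos u hu)
    have e3 : ∫ u in Set.Ioi (0:ℝ), (Real.sqrt (w u) * g u) ^ 2 = (m.factorial : ℝ) * s := by
      rw [← valwg2]
      refine setIntegral_congr_fun measurableSet_Ioi (fun u hu => ?_)
      rw [mul_pow, Real.sq_sqrt (hwpos u hu)]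
    rw [e1, e2, e3] at h
    exact h
  -- combine
  have hF : (0:ℝ) < (m.factorial : ℝ) := by exact_mod_cast m.factorial_pos
  have hBnn : 0 ≤ B := by
    rw [hB]
    exact setIntegral_nonneg measurableSet_Ioi
      (fun u hu => mul_nonneg (hwpos u hu) (hgpos u hu).le)
  have hAnn : 0 ≤ A := by
    rw [hA]
    exact setIntegral_nonneg measurableSet_Ioi
      (fun u hu => div_nonneg (hwpos u hu) (hgpos u hu).le)
  have hss : 0 < Real.sqrt s := Real.sqrt_pos.2 hs_pos
  have hsq : Real.sqrt s ^ 2 = s := Real.sq_sqrt hs_pos.le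
  have hBle : B ≤ (m.factorial : ℝ) * Real.sqrt s := by
    nlinarith [cs2, hsq, hBnn, mul_pos hF hss, hF.le, hss.le]
  have hAge : (m.factorial : ℝ) / Real.sqrt s ≤ A := by
    have h1 : ((m.factorial : ℝ)) ^ 2 ≤ A * ((m.factorial : ℝ) * Real.sqrt s) := by
      nlinarith [cs1, hBle, hAnn, mul_le_mul_of_nonneg_left hBle hAnn]
    rw [div_le_iff₀ hss]
    nlinarith [h1, hF, mul_pos hF hF]
  have main : Vm m x ≥ 1 / Real.sqrt s := by
    have hVm : Vm m x = (1 / (m.factorial : ℝ)) * A := by rw [Vm, hA]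
    rw [hVm, ge_iff_le]
    have he : (1/(m.factorial:ℝ)) * ((m.factorial:ℝ)/Real.sqrt s) = 1/Real.sqrt s := by
      field_simp
    rw [← he]
    exact mul_le_mul_of_nonneg_left hAge (by positivity)
  refine ⟨main, ?_⟩
  refine le_trans ?_ main
  have h1 : Real.sqrt s ≤ Real.sqrt ((m:ℝ)+1) + |x| := by
    rw [show s = ((m:ℝ)+1) + x^2 from rfl]
    have h2 : ((m:ℝ)+1) + x^2 ≤ (Real.sqrt ((m:ℝ)+1) + |x|) ^ 2 := by
      have := Real.sq_sqrt (show (0:ℝ) ≤ (m:ℝ)+1 by positivity)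
      nlinarith [Real.sqrt_nonneg ((m:ℝ)+1), abs_nonneg x, sq_abs x]
    calc Real.sqrt (((m:ℝ)+1) + x^2) ≤ Real.sqrt ((Real.sqrt ((m:ℝ)+1) + |x|)^2) :=
          Real.sqrt_le_sqrt h2
      _ = Real.sqrt ((m:ℝ)+1) + |x| :=
          Real.sqrt_sq (by positivity)
  exact one_div_le_one_div_of_le hss h1
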